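/- If A ⊆ P([n]) is a nonempty down-set, then the number of pairs {x,y} of distinct sets in A whose symmetric difference has size at most 1 is at most |A| · ⌊log₂ |A|⌋. -/

import Mathlib

lemma pair_structure {x y : Finset ℕ} (hxy : x ≠ y) (hc : (symmDiff x y).card ≤ 1) :
    ∃ a, symmDiff x y = {a} ∧ a ∈ x ∪ y ∧
      ((x = x ∪ y ∧ y = (x ∪ y).erase a) ∨ (y = x ∪ y ∧ x = (x ∪ y).erase a)) := by
  have hne : symmDiff x y ≠ ∅ := by
    intro h
    exact hxy (symmDiff_eq_bot.mp h)
  have hcard : (symmDiff x y).card = 1 := by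
    have := Finset.card_pos.mpr (Finset.nonempty_iff_ne_empty.mpr hne)
    omega
  obtain ⟨a, ha⟩ := Finset.card_eq_one.mp hcard
  refine ⟨a, ha, ?_, ?_⟩
  · have : a ∈ symmDiff x y := ha ▸ Finset.mem_singleton_self a
    rw [Finset.mem_symmDiff] at this
    rw [Finset.mem_union]; tauto
  · have hd : x \ y ∪ y \ x = {a} := by rw [← Finset.sup_eq_union, ← symmDiff_def]; exact ha
    have hax : a ∈ x ∨ a ∈ y := by
      have : a ∈ symmDiff x y := ha ▸ Finset.mem_singleton_self a
      rw [Finset.mem_symmDiff] at this; tauto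
    have hsub1 : x \ y ⊆ {a} := hd ▸ Finset.subset_union_left
    have hsub2 : y \ x ⊆ {a} := hd ▸ Finset.subset_union_right
    have key : ∀ u v : Finset ℕ, u \ v = {a} → v \ u = ∅ →
        (u = u ∪ v ∧ v = (u ∪ v).erase a) := by
      intro u v huv hvu
      have hvsub : v ⊆ u := by
        intro b hb
        by_contra hbu
        have : b ∈ v \ u := Finset.mem_sdiff.mpr ⟨hb, hbu⟩
        simp [hvu] at this
      have hu : u ∪ v = u := Finset.union_eq_left.mpr hvsub
      constructor
      · rw [hu]
      · rw [hu, ← Finset.sdiff_singleton_eq_erase, ← huv,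
          Finset.sdiff_sdiff_eq_self hvsub]
    by_cases h1 : (y \ x) = ∅
    · -- then x \ y = {a}
      have : x \ y = {a} := by
        rw [← hd, h1, Finset.union_empty]
      left
      exact key x y this h1
    · have h2 : x \ y = ∅ := by
        by_contra h2
        obtain ⟨b, hb⟩ := Finset.nonempty_iff_ne_empty.mpr h1
        obtain ⟨c, hc⟩ := Finset.nonempty_iff_ne_empty.mpr h2
        have hb' : b = a := Finset.mem_singleton.mp (hsub2 hb)
        have hc' : c = a := Finset.mem_singleton.mp (hsub1 hc)
        rw [Finset.mem_sdiff] at hb hc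
        rw [hb'] at hb; rw [hc'] at hc
        tauto
      have : y \ x = {a} := by
        rw [← hd, h2, Finset.empty_union]
      right
      rw [Finset.union_comm]
      exact key y x this h2

theorem stmt3 (n : ℕ) (A : Finset (Finset ℕ)) (hA : A.Nonempty)
    (hsub : ∀ x ∈ A, x ⊆ Finset.Icc 1 n)
    (hdown : ∀ x ∈ A, ∀ y ⊆ x, y ∈ A) :
    {e : Sym2 (Finset ℕ) | ∃ x ∈ A, ∃ y ∈ A,
        e = s(x, y) ∧ x ≠ y ∧ (symmDiff x y).card ≤ 1}.ncard
      ≤ A.card * Nat.log 2 A.card := by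
  set S := {e : Sym2 (Finset ℕ) | ∃ x ∈ A, ∃ y ∈ A,
      e = s(x, y) ∧ x ≠ y ∧ (symmDiff x y).card ≤ 1} with hS
  set T : Finset (Σ _ : Finset ℕ, ℕ) := A.sigma (fun x => x) with hT
  set G : Sym2 (Finset ℕ) → (Σ _ : Finset ℕ, ℕ) :=
    Sym2.lift ⟨fun x y => ⟨x ∪ y, (symmDiff x y).sum id⟩, by
      intro x y
      simp [Finset.union_comm, symmDiff_comm]⟩ with hG
  have hGval : ∀ x y : Finset ℕ, x ≠ y → (symmDiff x y).card ≤ 1 →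
      ∃ a, G s(x, y) = ⟨x ∪ y, a⟩ ∧ a ∈ x ∪ y ∧
        s(x, y) = s(x ∪ y, (x ∪ y).erase a) ∧ (x ∪ y = x ∨ x ∪ y = y) := by
    intro x y hxy hc
    obtain ⟨a, ha, hau, hcase⟩ := pair_structure hxy hc
    refine ⟨a, ?_, hau, ?_, ?_⟩
    · simp [hG, ha]
    · rcases hcase with ⟨h1, h2⟩ | ⟨h1, h2⟩
      · rw [← h1] at h2 ⊢; rw [h2]
      · rw [← h1] at h2 ⊢; rw [h2, Sym2.eq_swap]
    · rcases hcase with ⟨h1, _⟩ | ⟨h1, _⟩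
      · exact Or.inl h1.symm
      · exact Or.inr h1.symm
  have hmaps : ∀ e ∈ S, G e ∈ (T : Set (Σ _ : Finset ℕ, ℕ)) := by
    intro e he
    obtain ⟨x, hx, y, hy, he', hxy, hc⟩ := he
    obtain ⟨a, hGe, hau, _, hmem⟩ := hGval x y hxy hc
    rw [he', hGe]
    simp only [hT, Finset.mem_coe, Finset.mem_sigma]
    refine ⟨?_, hau⟩
    rcases hmem with h | h
    · rw [h]; exact hx
    · rw [h]; exact hy
  have hinj : Set.InjOn G S := by
    intro e1 he1 e2 he2 heq
    obtain ⟨x1, _, y1, _, he1', hxy1, hc1⟩ := he1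
    obtain ⟨x2, _, y2, _, he2', hxy2, hc2⟩ := he2
    obtain ⟨a1, hG1, _, hs1, _⟩ := hGval x1 y1 hxy1 hc1
    obtain ⟨a2, hG2, _, hs2, _⟩ := hGval x2 y2 hxy2 hc2
    rw [he1', he2'] at heq ⊢
    rw [hG1, hG2] at heq
    obtain ⟨hu, haa⟩ := Sigma.mk.inj_iff.mp heq
    rw [hs1, hs2, hu, eq_of_heq haa]
  have step1 : S.ncard ≤ T.card := by
    have := Set.ncard_le_ncard_of_injOn G hmaps hinj (Finset.finite_toSet T)
    rwa [Set.ncard_coe_finset] at this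
  refine step1.trans ?_
  rw [hT, Finset.card_sigma]
  have hbound : ∀ x ∈ A, x.card ≤ Nat.log 2 A.card := by
    intro x hx
    have hpow : x.powerset ⊆ A := by
      intro y hy
      exact hdown x hx y (Finset.mem_powerset.mp hy)
    have h2 : 2 ^ x.card ≤ A.card := by
      calc 2 ^ x.card = x.powerset.card := (Finset.card_powerset x).symm
        _ ≤ A.card := Finset.card_le_card hpow
    exact (Nat.le_log_iff_pow_le (by norm_num) (Finset.card_pos.mpr hA).ne').mpr h2
  calc ∑ x ∈ A, x.card ≤ ∑ _x ∈ A, Nat.log 2 A.card := Finset.sum_le_sum hbound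
    _ = A.card * Nat.log 2 A.card := by rw [Finset.sum_const, smul_eq_mul]
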